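/- Let M = [[A, B],[Bᵀ, C]] be a positive semidefinite real block matrix with A a d×d block, and suppose B = AW for some W. Then rank M = rank A if and only if C = WᵀAW. -/

import Mathlib

open Matrix

/-- Embedding of `Fin d → ℝ` into `Fin d ⊕ Fin e → ℝ` by zero on the right. -/
noncomputable def jleft (d e : ℕ) : (Fin d → ℝ) →ₗ[ℝ] ((Fin d ⊕ Fin e) → ℝ) where
  toFun x := Sum.elim x 0
  map_add' x y := by ext (i | i) <;> simp
  map_smul' c x := by ext (i | i) <;> simp

/-- Embedding of `Fin e → ℝ` into `Fin d ⊕ Fin e → ℝ` by zero on the left. -/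
noncomputable def jright (d e : ℕ) : (Fin e → ℝ) →ₗ[ℝ] ((Fin d ⊕ Fin e) → ℝ) where
  toFun y := Sum.elim 0 y
  map_add' x y := by ext (i | i) <;> simp
  map_smul' c x := by ext (i | i) <;> simp

lemma range_fromBlocks_diag (d e : ℕ) (A : Matrix (Fin d) (Fin d) ℝ)
    (S : Matrix (Fin e) (Fin e) ℝ) :
    LinearMap.range (fromBlocks A 0 0 S).mulVecLin =
      (LinearMap.range A.mulVecLin).map (jleft d e) ⊔
        (LinearMap.range S.mulVecLin).map (jright d e) := by
  apply le_antisymm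
  · rintro _ ⟨v, rfl⟩
    have hv : (fromBlocks A 0 0 S).mulVecLin v =
        jleft d e (A.mulVec (v ∘ Sum.inl)) + jright d e (S.mulVec (v ∘ Sum.inr)) := by
      ext (i | i) <;> simp [mulVecLin_apply, fromBlocks_mulVec, jleft, jright]
    rw [hv]
    exact Submodule.add_mem _
      (Submodule.mem_sup_left ⟨A.mulVec (v ∘ Sum.inl), ⟨_, rfl⟩, rfl⟩)
      (Submodule.mem_sup_right ⟨S.mulVec (v ∘ Sum.inr), ⟨_, rfl⟩, rfl⟩)
  · apply sup_le
    · rintro _ ⟨_, ⟨x, rfl⟩, rfl⟩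
      refine ⟨Sum.elim x 0, ?_⟩
      ext (i | i) <;> simp [mulVecLin_apply, fromBlocks_mulVec, jleft, jright]
    · rintro _ ⟨_, ⟨y, rfl⟩, rfl⟩
      refine ⟨Sum.elim 0 y, ?_⟩
      ext (i | i) <;> simp [mulVecLin_apply, fromBlocks_mulVec, jleft, jright]

lemma rank_fromBlocks_diag (d e : ℕ) (A : Matrix (Fin d) (Fin d) ℝ)
    (S : Matrix (Fin e) (Fin e) ℝ) :
    (fromBlocks A 0 0 S).rank = A.rank + S.rank := by
  have hjl : Function.Injective (jleft d e) := by
    intro x y h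
    funext i
    have := congrFun h (Sum.inl i)
    simpa [jleft] using this
  have hjr : Function.Injective (jright d e) := by
    intro x y h
    funext i
    have := congrFun h (Sum.inr i)
    simpa [jright] using this
  have hdisj : Disjoint ((LinearMap.range A.mulVecLin).map (jleft d e))
      ((LinearMap.range S.mulVecLin).map (jright d e)) := by
    rw [Submodule.disjoint_def]
    rintro v ⟨a, _, rfl⟩ ⟨b, _, hb⟩
    funext i
    rcases i with i | i
    · have := congrFun hb (Sum.inl i)
      simpa [jleft, jright] using this.symm
    · simp [jleft]
  have hsum := Submodule.finrank_sup_add_finrank_inf_eq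
    ((LinearMap.range A.mulVecLin).map (jleft d e))
    ((LinearMap.range S.mulVecLin).map (jright d e))
  rw [hdisj.eq_bot, finrank_bot, add_zero] at hsum
  rw [Matrix.rank, range_fromBlocks_diag, hsum, Matrix.rank, Matrix.rank,
    ← LinearEquiv.finrank_eq (Submodule.equivMapOfInjective _ hjl _),
    ← LinearEquiv.finrank_eq (Submodule.equivMapOfInjective _ hjr _)]

/-- For a positive semidefinite block matrix M = [[A, B],[Bᵀ, C]] with B = AW,
rank M = rank A iff C = WᵀAW. -/
theorem flat_iff_C_eq (d e : ℕ) (A : Matrix (Fin d) (Fin d) ℝ)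
    (B : Matrix (Fin d) (Fin e) ℝ) (C : Matrix (Fin e) (Fin e) ℝ)
    (W : Matrix (Fin d) (Fin e) ℝ)
    (hM : (Matrix.fromBlocks A B Bᵀ C).PosSemidef) (hB : B = A * W) :
    (Matrix.fromBlocks A B Bᵀ C).rank = A.rank ↔ C = Wᵀ * A * W := by
  classical
  -- A is symmetric
  have hA : Aᵀ = A := by
    have h := hM.1
    rw [← conjTranspose_eq_transpose_of_trivial]
    have := congrArg Matrix.toBlocks₁₁ h
    simpa [fromBlocks_conjTranspose, fromBlocks_transpose] using this
  set S : Matrix (Fin e) (Fin e) ℝ := C - Wᵀ * A * W with hS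
  have key : fromBlocks A B Bᵀ C =
      (fromBlocks 1 0 Wᵀ 1) * (fromBlocks A 0 0 S) * (fromBlocks 1 W 0 1) := by
    rw [fromBlocks_multiply, fromBlocks_multiply]
    congr 1 <;> simp [hB, hS, transpose_mul, hA, Matrix.mul_assoc]
  have hdetU : IsUnit (fromBlocks (1 : Matrix (Fin d) (Fin d) ℝ) W 0 1).det := by
    rw [det_fromBlocks_zero₂₁]; simp
  have hdetV : IsUnit (fromBlocks (1 : Matrix (Fin d) (Fin d) ℝ) 0 Wᵀ 1).det := by
    rw [det_fromBlocks_zero₁₂]; simp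
  have hrank : (fromBlocks A B Bᵀ C).rank = A.rank + S.rank := by
    rw [key, rank_mul_eq_left_of_isUnit_det _ _ hdetU,
      rank_mul_eq_right_of_isUnit_det _ _ hdetV, rank_fromBlocks_diag]
  rw [hrank]
  constructor
  · intro h
    have hS0 : S.rank = 0 := by omega
    have hrange : LinearMap.range S.mulVecLin = ⊥ := by
      rw [Matrix.rank] at hS0
      exact Submodule.finrank_eq_zero.mp hS0
    have hSzero : S = 0 := by
      ext i j
      have h1 : S.mulVecLin (Pi.single j 1) = 0 := by
        have : S.mulVecLin (Pi.single j 1) ∈ LinearMap.range S.mulVecLin :=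
          LinearMap.mem_range_self _ _
        rw [hrange] at this
        simpa using this
      have h2 := congrFun h1 i
      simpa [mulVecLin_apply, mulVec_single] using h2
    rw [hS] at hSzero
    exact sub_eq_zero.mp hSzero
  · intro h
    have : S = 0 := by rw [hS, h, sub_self]
    rw [this, Matrix.rank_zero, add_zero]
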